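/- Let n ≥ 3 and let a be a constant with 0 < a < n−2. Then there exists C > 0 such that for all y ∈ ℝⁿ: ∫_{ℝⁿ} |y−z|^{−(n−2)}·(1+|z|)^{−(2+a)} dz ≤ C·(1+|y|)^{−a}. -/

import Mathlib

open MeasureTheory Metric Set Filter Module
open scoped ENNReal

noncomputable section

abbrev Euc (n : ℕ) := EuclideanSpace ℝ (Fin n)

lemma lintegral_fun_norm_addHaar' {E : Type*} [NormedAddCommGroup E] [NormedSpace ℝ E]
    [MeasurableSpace E] [BorelSpace E] [Nontrivial E] [FiniteDimensional ℝ E]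
    (μ : Measure E) [μ.IsAddHaarMeasure] (g : ℝ → ℝ≥0∞) (hg : Measurable g) :
    ∫⁻ x, g ‖x‖ ∂μ = (finrank ℝ E) * μ (ball 0 1) *
      ∫⁻ t in Ioi (0:ℝ), ENNReal.ofReal (t ^ (finrank ℝ E - 1)) * g t := by
  have h1 := lintegral_subtype_comap (μ := μ) (measurableSet_singleton (0:E)).compl
    (fun x => g ‖x‖)
  rw [MeasureTheory.restrict_compl_singleton] at h1
  have h2 : ∫⁻ x : ({(0:E)}ᶜ : Set E), g ‖(x:E)‖ ∂(μ.comap (↑)) =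
      ∫⁻ p : sphere (0:E) 1 × Ioi (0:ℝ), g p.2
        ∂(μ.toSphere.prod (.volumeIoiPow (finrank ℝ E - 1))) :=
    by rw [← μ.measurePreserving_homeomorphUnitSphereProd.lintegral_comp_emb
      (Homeomorph.measurableEmbedding _) (fun p => g p.2)]; simp only [homeomorphUnitSphereProd_apply_snd_coe]
  have h3 : ∫⁻ p : sphere (0:E) 1 × Ioi (0:ℝ), g p.2
        ∂(μ.toSphere.prod (.volumeIoiPow (finrank ℝ E - 1))) =
      μ.toSphere univ * ∫⁻ r : Ioi (0:ℝ), g r ∂(Measure.volumeIoiPow (finrank ℝ E - 1)) := by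
    rw [lintegral_prod (fun p : (sphere (0:E) 1) × (Ioi (0:ℝ)) => g p.2)
      (Measurable.aemeasurable (by fun_prop))]
    simp [lintegral_const, mul_comm]
  have h4 : ∫⁻ r : Ioi (0:ℝ), g r ∂(Measure.volumeIoiPow (finrank ℝ E - 1)) =
      ∫⁻ t in Ioi (0:ℝ), ENNReal.ofReal (t ^ (finrank ℝ E - 1)) * g t := by
    rw [Measure.volumeIoiPow]
    have hwd := lintegral_withDensity_eq_lintegral_mul (Measure.comap Subtype.val volume)
      (f := fun r : Ioi (0:ℝ) => ENNReal.ofReal (r.1 ^ (finrank ℝ E - 1)))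
      ((measurable_subtype_coe.pow_const _).ennreal_ofReal)
      (g := fun r : Ioi (0:ℝ) => g r) (Measurable.comp hg measurable_subtype_coe)
    rw [hwd]
    simp only [Pi.mul_apply]
    exact lintegral_subtype_comap (μ := (volume : Measure ℝ)) (s := Ioi (0:ℝ))
      measurableSet_Ioi (fun t => ENNReal.ofReal (t ^ (finrank ℝ E - 1)) * g t)
  rw [← h1, h2, h3, h4, Measure.toSphere_apply_univ, mul_assoc]

section helpers

variable {n : ℕ}

lemma euc_polar (hn : 0 < n) {g : ℝ → ℝ≥0∞} (hg : Measurable g) :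
    ∫⁻ x : Euc n, g ‖x‖ = (n : ℝ≥0∞) * volume (ball (0:Euc n) 1) *
      ∫⁻ t in Ioi (0:ℝ), ENNReal.ofReal (t ^ (n - 1)) * g t := by
  haveI : Nontrivial (Euc n) :=
    Module.nontrivial_of_finrank_pos (R := ℝ) (by rw [finrank_euclideanSpace_fin]; exact hn)
  have := lintegral_fun_norm_addHaar' (volume : Measure (Euc n)) g hg
  rw [finrank_euclideanSpace_fin] at this
  exact this

lemma euc_ball (hn : 0 < n) {g : ℝ → ℝ≥0∞} (hg : Measurable g) (r : ℝ) :
    ∫⁻ x : Euc n in ball 0 r, g ‖x‖ = (n : ℝ≥0∞) * volume (ball (0:Euc n) 1) *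
      ∫⁻ t in Ioo (0:ℝ) r, ENNReal.ofReal (t ^ (n - 1)) * g t := by
  have hind : ∀ x : Euc n, (ball (0:Euc n) r).indicator (fun x => g ‖x‖) x =
      (Iio r).indicator g ‖x‖ := by
    intro x
    by_cases h : ‖x‖ < r <;> simp [Set.indicator_apply, mem_ball_zero_iff, h]
  rw [← lintegral_indicator measurableSet_ball]
  calc ∫⁻ x : Euc n, (ball (0:Euc n) r).indicator (fun x => g ‖x‖) x
      = ∫⁻ x : Euc n, (Iio r).indicator g ‖x‖ := lintegral_congr hind
    _ = (n : ℝ≥0∞) * volume (ball (0:Euc n) 1) *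
        ∫⁻ t in Ioi (0:ℝ), ENNReal.ofReal (t ^ (n - 1)) * (Iio r).indicator g t :=
      euc_polar hn (hg.indicator measurableSet_Iio)
    _ = _ := by
      congr 1
      have h2 : ∀ t : ℝ, ENNReal.ofReal (t ^ (n - 1)) * (Iio r).indicator g t =
          (Iio r).indicator (fun t => ENNReal.ofReal (t ^ (n - 1)) * g t) t := by
        intro t
        by_cases h : t ∈ Iio r <;> simp [h]
      simp_rw [h2]
      rw [lintegral_indicator measurableSet_Iio, Measure.restrict_restrict measurableSet_Iio,
        Set.Iio_inter_Ioi]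

lemma euc_compl_ball (hn : 0 < n) {g : ℝ → ℝ≥0∞} (hg : Measurable g) {T : ℝ} (hT : 0 < T) :
    ∫⁻ x : Euc n in (ball 0 T)ᶜ, g ‖x‖ = (n : ℝ≥0∞) * volume (ball (0:Euc n) 1) *
      ∫⁻ t in Ioi T, ENNReal.ofReal (t ^ (n - 1)) * g t := by
  have hind : ∀ x : Euc n, ((ball (0:Euc n) T)ᶜ).indicator (fun x => g ‖x‖) x =
      (Ici T).indicator g ‖x‖ := by
    intro x
    by_cases h : T ≤ ‖x‖ <;> simp [Set.indicator_apply, mem_ball_zero_iff, h, not_lt]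
  rw [← lintegral_indicator measurableSet_ball.compl]
  calc ∫⁻ x : Euc n, ((ball (0:Euc n) T)ᶜ).indicator (fun x => g ‖x‖) x
      = ∫⁻ x : Euc n, (Ici T).indicator g ‖x‖ := lintegral_congr hind
    _ = (n : ℝ≥0∞) * volume (ball (0:Euc n) 1) *
        ∫⁻ t in Ioi (0:ℝ), ENNReal.ofReal (t ^ (n - 1)) * (Ici T).indicator g t :=
      euc_polar hn (hg.indicator measurableSet_Ici)
    _ = _ := by
      congr 1
      have h2 : ∀ t : ℝ, ENNReal.ofReal (t ^ (n - 1)) * (Ici T).indicator g t =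
          (Ici T).indicator (fun t => ENNReal.ofReal (t ^ (n - 1)) * g t) t := by
        intro t
        by_cases h : t ∈ Ici T <;> simp [h]
      simp_rw [h2]
      have hIT : Ici T ∩ Ioi (0:ℝ) = Ici T :=
        inter_eq_left.2 (fun t ht => lt_of_lt_of_le hT ht)
      rw [lintegral_indicator measurableSet_Ici, Measure.restrict_restrict measurableSet_Ici,
        hIT, setLIntegral_congr (Ioi_ae_eq_Ici (a := T)).symm]

lemma lint_Ioo {b r : ℝ} (hb : -1 < b) (hr : 0 < r) :
    ∫⁻ t in Ioo (0:ℝ) r, ENNReal.ofReal (t ^ b) = ENNReal.ofReal (r ^ (b+1) / (b+1)) := by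
  have hint : IntegrableOn (fun t : ℝ => t ^ b) (Ioo 0 r) :=
    ((intervalIntegral.intervalIntegrable_rpow' hb (a := 0) (b := r)).1).mono_set
      Ioo_subset_Ioc_self
  rw [← ofReal_integral_eq_lintegral_ofReal hint ?_]
  · congr 1
    rw [← integral_Ioc_eq_integral_Ioo, ← intervalIntegral.integral_of_le hr.le,
      integral_rpow (Or.inl hb), Real.zero_rpow (by linarith), sub_zero]
  · filter_upwards [ae_restrict_mem measurableSet_Ioo] with t ht
    exact Real.rpow_nonneg ht.1.le _

lemma lint_Ioi' {b T : ℝ} (hb : b < -1) (hT : 0 < T) :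
    ∫⁻ t in Ioi T, ENNReal.ofReal (t ^ b) = ENNReal.ofReal (-T ^ (b+1) / (b+1)) := by
  rw [← ofReal_integral_eq_lintegral_ofReal (integrableOn_Ioi_rpow_of_lt hb hT) ?_]
  · rw [integral_Ioi_rpow_of_lt hb hT]
  · filter_upwards [ae_restrict_mem measurableSet_Ioi] with t ht
    exact Real.rpow_nonneg (le_of_lt (lt_trans hT ht)) _

lemma pow_mul_rpow {t : ℝ} (ht : 0 < t) (m : ℕ) (c : ℝ) :
    ENNReal.ofReal (t ^ m) * ENNReal.ofReal (t ^ c) = ENNReal.ofReal (t ^ ((m:ℝ) + c)) := by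
  rw [← ENNReal.ofReal_mul (by positivity), ← Real.rpow_natCast t m, ← Real.rpow_add ht]

end helpers

set_option maxHeartbeats 1000000 in
/-- For `n ≥ 3` and `0 < a < n - 2` there exists `C > 0` such that
`∫ z, ‖y - z‖^{-(n-2)} (1 + ‖z‖)^{-(2+a)} dz ≤ C (1 + ‖y‖)^{-a}` for all `y ∈ ℝⁿ`. -/
theorem statement13 (n : ℕ) (hn : 3 ≤ n) (a : ℝ) (ha : 0 < a) (ha' : a < (n : ℝ) - 2) :
    ∃ C : ℝ, 0 < C ∧ ∀ y : Euc n,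
      (∫ z : Euc n, ‖y - z‖ ^ (-((n : ℝ) - 2)) * (1 + ‖z‖) ^ (-((2 : ℝ) + a)))
        ≤ C * (1 + ‖y‖) ^ (-a) := by
  have hn0 : 0 < n := by omega
  haveI : Nontrivial (Euc n) :=
    Module.nontrivial_of_finrank_pos (R := ℝ) (by rw [finrank_euclideanSpace_fin]; omega)
  have hn1 : 1 ≤ n := by omega
  have hn3 : (3:ℝ) ≤ (n:ℝ) := by exact_mod_cast hn
  set p : ℝ := -((n : ℝ) - 2) with hp_def
  set q : ℝ := -((2 : ℝ) + a) with hq_def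
  have hp : p ≤ 0 := by simp [hp_def]; linarith
  have hq : q ≤ 0 := by simp [hq_def]; linarith
  set κ : ℝ≥0∞ := (n : ℝ≥0∞) * volume (ball (0:Euc n) 1) with hκ_def
  have hκ_top : κ ≠ ∞ := ENNReal.mul_ne_top (ENNReal.natCast_ne_top n) measure_ball_lt_top.ne
  have hκ_0 : κ ≠ 0 := by
    apply mul_ne_zero
    · exact Nat.cast_ne_zero.mpr (by omega)
    · exact (measure_ball_pos volume (0:Euc n) one_pos).ne'
  set K : ℝ := κ.toReal with hK_def
  have hK : 0 < K := ENNReal.toReal_pos hκ_0 hκ_top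
  set c₁ : ℝ := (2:ℝ) ^ a / 2 with hc₁_def
  set c₂ : ℝ := (2:ℝ) ^ (2*(n:ℝ) - 4 - a) / ((n:ℝ) - 2 - a) with hc₂_def
  set c₃ : ℝ := (2:ℝ) ^ ((n:ℝ) - 2 - a) / a with hc₃_def
  have hc₁ : 0 < c₁ := by positivity
  have hc₂ : 0 < c₂ := div_pos (Real.rpow_pos_of_pos two_pos _) (by linarith)
  have hc₃ : 0 < c₃ := div_pos (Real.rpow_pos_of_pos two_pos _) ha
  refine ⟨K * (c₁ + c₂ + c₃), by positivity, fun y => ?_⟩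
  set R : ℝ := ‖y‖ with hR_def
  have hR : 0 ≤ R := norm_nonneg y
  have h1R : 0 < 1 + R := by linarith
  set r : ℝ := (1 + R)/2 with hr_def
  set T : ℝ := 2*(1 + R) with hT_def
  have hr : 0 < r := by positivity
  have hT : 0 < T := by positivity
  set F : Euc n → ℝ := fun z => ‖y - z‖ ^ p * (1 + ‖z‖) ^ q with hF_def
  have hFnn : ∀ z, 0 ≤ F z := fun z => by
    apply mul_nonneg <;> exact Real.rpow_nonneg (by positivity) _
  have hFmeas : Measurable F :=
    (((measurable_const.sub measurable_id).norm).pow measurable_const).mul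
      ((measurable_const.add measurable_norm).pow measurable_const)
  rw [integral_eq_lintegral_of_nonneg_ae (ae_of_all _ hFnn) hFmeas.aestronglyMeasurable]
  apply ENNReal.toReal_le_of_le_ofReal (by positivity)
  -- the main lintegral estimate
  set u : ℝ := (1 + R) ^ (-a) with hu_def
  have hu : 0 < u := Real.rpow_pos_of_pos h1R _
  set A : Set (Euc n) := ball y r with hA_def
  set S : Set (Euc n) := ball (0:Euc n) T with hS_def
  have hAmeas : MeasurableSet A := measurableSet_ball
  have hSmeas : MeasurableSet S := measurableSet_ball
  have hcover : ∫⁻ z : Euc n, ENNReal.ofReal (F z) ≤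
      (∫⁻ z in A, ENNReal.ofReal (F z)) + ((∫⁻ z in S \ A, ENNReal.ofReal (F z))
        + (∫⁻ z in Sᶜ, ENNReal.ofReal (F z))) := by
    have huniv : (univ : Set (Euc n)) = A ∪ (S \ A ∪ Sᶜ) := by
      ext z; by_cases h1 : z ∈ A <;> by_cases h2 : z ∈ S <;> simp [h1, h2]
    calc ∫⁻ z : Euc n, ENNReal.ofReal (F z)
        = ∫⁻ z in (univ : Set (Euc n)), ENNReal.ofReal (F z) := (setLIntegral_univ _).symm
      _ = ∫⁻ z in A ∪ (S \ A ∪ Sᶜ), ENNReal.ofReal (F z) := by rw [← huniv]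
      _ ≤ _ := le_trans (lintegral_union_le _ _ _)
          (add_le_add le_rfl (lintegral_union_le _ _ _))
  have htwo : ((2:ℝ)^p)⁻¹ = (2:ℝ) ^ ((n:ℝ)-2) := by
    rw [← Real.rpow_neg (by norm_num : (0:ℝ) ≤ 2) p]
    congr 1
    rw [hp_def]; ring
  have h2p : (2:ℝ)^p ≠ 0 := (Real.rpow_pos_of_pos two_pos p).ne'
  -- Bound on A
  have hbA : ∫⁻ z in A, ENNReal.ofReal (F z) ≤ κ * ENNReal.ofReal (c₁ * u) := by
    have step1 : ∫⁻ z in A, ENNReal.ofReal (F z) ≤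
        ∫⁻ z in A, ENNReal.ofReal (r ^ q) * ENNReal.ofReal (‖y - z‖ ^ p) := by
      refine setLIntegral_mono' hAmeas (fun z hz => ?_)
      have h2 : ‖y - z‖ < r := by
        rw [norm_sub_rev]; exact mem_ball_iff_norm.1 hz
      have h3 : R - ‖y - z‖ ≤ ‖z‖ := by
        have h := norm_sub_norm_le y z
        rw [hR_def]; linarith
      have hz1 : r ≤ 1 + ‖z‖ := by
        rw [hr_def] at h2 ⊢; linarith
      have h4 : (1 + ‖z‖) ^ q ≤ r ^ q := Real.rpow_le_rpow_of_nonpos hr hz1 hq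
      have hmul : F z ≤ r ^ q * ‖y - z‖ ^ p := by
        simp only [hF_def]
        calc ‖y - z‖ ^ p * (1 + ‖z‖) ^ q ≤ ‖y - z‖ ^ p * r ^ q :=
              mul_le_mul_of_nonneg_left h4 (Real.rpow_nonneg (norm_nonneg _) _)
          _ = r ^ q * ‖y - z‖ ^ p := mul_comm _ _
      calc ENNReal.ofReal (F z) ≤ ENNReal.ofReal (r ^ q * ‖y - z‖ ^ p) :=
            ENNReal.ofReal_le_ofReal hmul
        _ = _ := ENNReal.ofReal_mul (Real.rpow_nonneg hr.le _)
    have step3 : ∫⁻ z in A, ENNReal.ofReal (‖y - z‖ ^ p) =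
        ∫⁻ x in ball (0:Euc n) r, ENNReal.ofReal (‖x‖ ^ p) := by
      have hpre : A = (fun z : Euc n => y - z) ⁻¹' (ball 0 r) := by
        ext z
        simp [hA_def, mem_ball, dist_eq_norm, mem_ball_zero_iff, norm_sub_rev]
      rw [hpre]
      exact (Measure.measurePreserving_sub_left volume y).setLIntegral_comp_preimage_emb
        ((Homeomorph.subLeft y).measurableEmbedding) (fun x => ENNReal.ofReal (‖x‖ ^ p)) _
    have step4 : ∫⁻ x in ball (0:Euc n) r, ENNReal.ofReal (‖x‖ ^ p) =
        κ * ENNReal.ofReal (r ^ ((1:ℝ)+1) / ((1:ℝ)+1)) := by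
      rw [euc_ball hn0 (g := fun t => ENNReal.ofReal (t ^ p))
        ((measurable_id.pow measurable_const).ennreal_ofReal) r]
      have hcongr : ∀ t ∈ Ioo (0:ℝ) r,
          ENNReal.ofReal (t ^ (n - 1)) * ENNReal.ofReal (t ^ p) =
            ENNReal.ofReal (t ^ (1:ℝ)) := by
        intro t ht
        rw [pow_mul_rpow ht.1]
        congr 1
        rw [Nat.cast_sub hn1, hp_def]
        push_cast
        ring
      rw [setLIntegral_congr_fun measurableSet_Ioo hcongr,
        lint_Ioo (b := (1:ℝ)) (by norm_num) hr]
    calc ∫⁻ z in A, ENNReal.ofReal (F z)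
        ≤ ∫⁻ z in A, ENNReal.ofReal (r ^ q) * ENNReal.ofReal (‖y - z‖ ^ p) := step1
      _ = ENNReal.ofReal (r ^ q) * ∫⁻ z in A, ENNReal.ofReal (‖y - z‖ ^ p) :=
          lintegral_const_mul' _ _ ENNReal.ofReal_ne_top
      _ = ENNReal.ofReal (r ^ q) * (κ * ENNReal.ofReal (r ^ ((1:ℝ)+1) / ((1:ℝ)+1))) := by
          rw [step3, step4]
      _ = κ * (ENNReal.ofReal (r ^ q) * ENNReal.ofReal (r ^ ((1:ℝ)+1) / ((1:ℝ)+1))) := by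
          rw [← mul_assoc, mul_comm (ENNReal.ofReal (r ^ q)) κ, mul_assoc]
      _ = κ * ENNReal.ofReal (r ^ q * (r ^ ((1:ℝ)+1) / ((1:ℝ)+1))) := by
          rw [← ENNReal.ofReal_mul (Real.rpow_nonneg hr.le _)]
      _ = κ * ENNReal.ofReal (c₁ * u) := by
          congr 1
          have h11 : ((1:ℝ)+1) = (2:ℝ) := by norm_num
          rw [h11]
          have hcomb : r ^ q * r ^ (2:ℝ) = r ^ (-a) := by
            rw [← Real.rpow_add hr]; congr 1; rw [hq_def]; ring
          rw [← mul_div_assoc, hcomb]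
          rw [hr_def, Real.div_rpow h1R.le (by norm_num : (0:ℝ) ≤ 2),
            Real.rpow_neg (by norm_num : (0:ℝ) ≤ 2) a, hc₁_def, hu_def]
          field_simp
  -- Bound on S \ A
  have hbB : ∫⁻ z in S \ A, ENNReal.ofReal (F z) ≤ κ * ENNReal.ofReal (c₂ * u) := by
    have hd : ((n:ℝ) - 2 - a) ≠ 0 := by linarith
    have step1 : ∫⁻ z in S \ A, ENNReal.ofReal (F z) ≤
        ∫⁻ z in S \ A, ENNReal.ofReal (r ^ p) * ENNReal.ofReal (‖z‖ ^ q) := by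
      refine setLIntegral_mono_ae' (hSmeas.diff hAmeas) ?_
      filter_upwards [(Set.countable_singleton (0:Euc n)).ae_notMem volume] with z hz0 hz
      have hzne : z ≠ 0 := by simpa using hz0
      have hznorm : 0 < ‖z‖ := norm_pos_iff.2 hzne
      have hge : r ≤ ‖y - z‖ := by
        have hnA : z ∉ A := hz.2
        have : ¬ (‖z - y‖ < r) := fun h => hnA (mem_ball_iff_norm.2 h)
        rw [norm_sub_rev]; linarith [not_lt.1 this]
      have h1 : ‖y - z‖ ^ p ≤ r ^ p := Real.rpow_le_rpow_of_nonpos hr hge hp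
      have h2 : (1 + ‖z‖) ^ q ≤ ‖z‖ ^ q :=
        Real.rpow_le_rpow_of_nonpos hznorm (by linarith) hq
      calc ENNReal.ofReal (F z) ≤ ENNReal.ofReal (r ^ p * ‖z‖ ^ q) := by
            apply ENNReal.ofReal_le_ofReal
            simp only [hF_def]
            exact mul_le_mul h1 h2 (Real.rpow_nonneg (by positivity) _)
              (Real.rpow_nonneg hr.le _)
        _ = _ := ENNReal.ofReal_mul (Real.rpow_nonneg hr.le _)
    have step4 : ∫⁻ z in S, ENNReal.ofReal (‖z‖ ^ q) =
        κ * ENNReal.ofReal (T ^ (((n:ℝ)-3-a)+1) / (((n:ℝ)-3-a)+1)) := by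
      rw [hS_def, euc_ball hn0 (g := fun t => ENNReal.ofReal (t ^ q))
        ((measurable_id.pow measurable_const).ennreal_ofReal) T]
      have hcongr : ∀ t ∈ Ioo (0:ℝ) T,
          ENNReal.ofReal (t ^ (n - 1)) * ENNReal.ofReal (t ^ q) =
            ENNReal.ofReal (t ^ ((n:ℝ)-3-a)) := by
        intro t ht
        rw [pow_mul_rpow ht.1]
        congr 1
        rw [Nat.cast_sub hn1, hq_def]
        push_cast
        ring
      rw [setLIntegral_congr_fun measurableSet_Ioo hcongr,
        lint_Ioo (b := (n:ℝ)-3-a) (by linarith) hT]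
    calc ∫⁻ z in S \ A, ENNReal.ofReal (F z)
        ≤ ∫⁻ z in S \ A, ENNReal.ofReal (r ^ p) * ENNReal.ofReal (‖z‖ ^ q) := step1
      _ = ENNReal.ofReal (r ^ p) * ∫⁻ z in S \ A, ENNReal.ofReal (‖z‖ ^ q) :=
          lintegral_const_mul' _ _ ENNReal.ofReal_ne_top
      _ ≤ ENNReal.ofReal (r ^ p) * ∫⁻ z in S, ENNReal.ofReal (‖z‖ ^ q) :=
          mul_le_mul_right (lintegral_mono_set diff_subset) _
      _ = ENNReal.ofReal (r ^ p) *
          (κ * ENNReal.ofReal (T ^ (((n:ℝ)-3-a)+1) / (((n:ℝ)-3-a)+1))) := by rw [step4]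
      _ = κ * (ENNReal.ofReal (r ^ p) *
          ENNReal.ofReal (T ^ (((n:ℝ)-3-a)+1) / (((n:ℝ)-3-a)+1))) := by
          rw [← mul_assoc, mul_comm (ENNReal.ofReal (r ^ p)) κ, mul_assoc]
      _ = κ * ENNReal.ofReal (r ^ p * (T ^ (((n:ℝ)-3-a)+1) / (((n:ℝ)-3-a)+1))) := by
          rw [← ENNReal.ofReal_mul (Real.rpow_nonneg hr.le _)]
      _ = κ * ENNReal.ofReal (c₂ * u) := by
          congr 1
          have hb1 : ((n:ℝ)-3-a)+1 = (n:ℝ)-2-a := by ring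
          rw [hb1]
          have e1 : (1+R)^p * (1+R)^((n:ℝ)-2-a) = (1+R)^(-a) := by
            rw [← Real.rpow_add h1R]; congr 1; rw [hp_def]; ring
          have e2 : (2:ℝ)^((n:ℝ)-2) * (2:ℝ)^((n:ℝ)-2-a) = (2:ℝ)^(2*(n:ℝ)-4-a) := by
            rw [← Real.rpow_add two_pos]; congr 1; ring
          rw [hr_def, hT_def, Real.div_rpow h1R.le (by norm_num : (0:ℝ) ≤ 2),
            Real.mul_rpow (by norm_num : (0:ℝ) ≤ 2) h1R.le, hc₂_def, hu_def,
            ← e1, ← e2, ← htwo]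
          field_simp
  -- Bound on Sᶜ
  have hbC : ∫⁻ z in Sᶜ, ENNReal.ofReal (F z) ≤ κ * ENNReal.ofReal (c₃ * u) := by
    have step1 : ∫⁻ z in Sᶜ, ENNReal.ofReal (F z) ≤
        ∫⁻ z in Sᶜ, ENNReal.ofReal ((2:ℝ)^((n:ℝ)-2)) *
          ENNReal.ofReal (‖z‖ ^ (-((n:ℝ)+a))) := by
      refine setLIntegral_mono' hSmeas.compl (fun z hz => ?_)
      have hzT : T ≤ ‖z‖ := le_of_not_gt (fun h => hz (mem_ball_zero_iff.2 h))
      have hz0 : 0 < ‖z‖ := lt_of_lt_of_le hT hzT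
      have hyz : ‖z‖/2 ≤ ‖y - z‖ := by
        have h5 : ‖z‖ - R ≤ ‖y - z‖ := by
          have h := norm_sub_norm_le z y
          have h' : ‖z - y‖ = ‖y - z‖ := norm_sub_rev z y
          rw [hR_def]
          linarith
        have h6 : R ≤ ‖z‖/2 := by rw [hT_def] at hzT; linarith
        linarith
      have h1 : ‖y - z‖ ^ p ≤ (‖z‖/2) ^ p :=
        Real.rpow_le_rpow_of_nonpos (by positivity) hyz hp
      have h2 : (1 + ‖z‖) ^ q ≤ ‖z‖ ^ q :=
        Real.rpow_le_rpow_of_nonpos hz0 (by linarith) hq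
      have h3 : (‖z‖/2) ^ p = (2:ℝ)^((n:ℝ)-2) * ‖z‖ ^ p := by
        rw [Real.div_rpow (norm_nonneg z) (by norm_num : (0:ℝ) ≤ 2), div_eq_mul_inv,
          htwo, mul_comm]
      have h4 : ‖z‖ ^ p * ‖z‖ ^ q = ‖z‖ ^ (-((n:ℝ)+a)) := by
        rw [← Real.rpow_add hz0]; congr 1; rw [hp_def, hq_def]; ring
      have hmul : F z ≤ (2:ℝ)^((n:ℝ)-2) * ‖z‖ ^ (-((n:ℝ)+a)) := by
        simp only [hF_def]
        calc ‖y - z‖ ^ p * (1 + ‖z‖) ^ q ≤ (‖z‖/2) ^ p * ‖z‖ ^ q :=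
              mul_le_mul h1 h2 (Real.rpow_nonneg (by positivity) _)
                (Real.rpow_nonneg (by positivity) _)
          _ = (2:ℝ)^((n:ℝ)-2) * (‖z‖ ^ p * ‖z‖ ^ q) := by rw [h3]; ring
          _ = _ := by rw [h4]
      calc ENNReal.ofReal (F z)
          ≤ ENNReal.ofReal ((2:ℝ)^((n:ℝ)-2) * ‖z‖ ^ (-((n:ℝ)+a))) :=
            ENNReal.ofReal_le_ofReal hmul
        _ = _ := ENNReal.ofReal_mul (by positivity)
    have step4 : ∫⁻ z in Sᶜ, ENNReal.ofReal (‖z‖ ^ (-((n:ℝ)+a))) =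
        κ * ENNReal.ofReal (T ^ (-a) / a) := by
      rw [hS_def, euc_compl_ball hn0 (g := fun t => ENNReal.ofReal (t ^ (-((n:ℝ)+a))))
        ((measurable_id.pow measurable_const).ennreal_ofReal) hT]
      have hcongr : ∀ t ∈ Ioi T,
          ENNReal.ofReal (t ^ (n - 1)) * ENNReal.ofReal (t ^ (-((n:ℝ)+a))) =
            ENNReal.ofReal (t ^ ((-1)-a)) := by
        intro t ht
        rw [pow_mul_rpow (lt_trans hT ht)]
        congr 1
        rw [Nat.cast_sub hn1]
        push_cast
        ring
      rw [setLIntegral_congr_fun measurableSet_Ioi hcongr,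
        lint_Ioi' (b := (-1)-a) (by linarith) hT]
      congr 1
      have hb1 : (-1)-a+1 = -a := by ring
      rw [hb1, neg_div_neg_eq]
    calc ∫⁻ z in Sᶜ, ENNReal.ofReal (F z)
        ≤ ∫⁻ z in Sᶜ, ENNReal.ofReal ((2:ℝ)^((n:ℝ)-2)) *
            ENNReal.ofReal (‖z‖ ^ (-((n:ℝ)+a))) := step1
      _ = ENNReal.ofReal ((2:ℝ)^((n:ℝ)-2)) *
            ∫⁻ z in Sᶜ, ENNReal.ofReal (‖z‖ ^ (-((n:ℝ)+a))) :=
          lintegral_const_mul' _ _ ENNReal.ofReal_ne_top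
      _ = ENNReal.ofReal ((2:ℝ)^((n:ℝ)-2)) * (κ * ENNReal.ofReal (T ^ (-a) / a)) := by
          rw [step4]
      _ = κ * (ENNReal.ofReal ((2:ℝ)^((n:ℝ)-2)) * ENNReal.ofReal (T ^ (-a) / a)) := by
          rw [← mul_assoc, mul_comm (ENNReal.ofReal ((2:ℝ)^((n:ℝ)-2))) κ, mul_assoc]
      _ = κ * ENNReal.ofReal ((2:ℝ)^((n:ℝ)-2) * (T ^ (-a) / a)) := by
          rw [← ENNReal.ofReal_mul (by positivity)]
      _ = κ * ENNReal.ofReal (c₃ * u) := by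
          congr 1
          have e2 : (2:ℝ)^((n:ℝ)-2) * (2:ℝ)^(-a) = (2:ℝ)^((n:ℝ)-2-a) := by
            rw [← Real.rpow_add two_pos]; congr 1
          rw [hT_def, Real.mul_rpow (by norm_num : (0:ℝ) ≤ 2) h1R.le, hc₃_def, hu_def, ← e2]
          field_simp
  calc ∫⁻ z : Euc n, ENNReal.ofReal (F z)
      ≤ (∫⁻ z in A, ENNReal.ofReal (F z)) + ((∫⁻ z in S \ A, ENNReal.ofReal (F z))
        + (∫⁻ z in Sᶜ, ENNReal.ofReal (F z))) := hcover
    _ ≤ κ * ENNReal.ofReal (c₁ * u) +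
        (κ * ENNReal.ofReal (c₂ * u) + κ * ENNReal.ofReal (c₃ * u)) :=
      add_le_add hbA (add_le_add hbB hbC)
    _ = κ * (ENNReal.ofReal (c₁ * u + (c₂ * u + c₃ * u))) := by
        rw [ENNReal.ofReal_add (by positivity) (by positivity),
          ENNReal.ofReal_add (by positivity) (by positivity), mul_add, mul_add]
    _ = ENNReal.ofReal (K * (c₁ + c₂ + c₃) * u) := by
        rw [← ENNReal.ofReal_toReal hκ_top, ← hK_def,
          ← ENNReal.ofReal_mul hK.le]
        congr 1
        ring
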